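/- Let V_h ⊂ H¹(Ω)^d and M_h = W_h ⊂ H¹(Ω) be finite element spaces, and let (u_h, p̃_h, q_h) : (0,T] → V_h × M_h × W_h solve the semi-discrete gel system: β(∇u_h, ∇v_h) − (p̃_h, div v_h) = ⟨f, v_h⟩ for all v_h ∈ V_h; (div u_h, φ_h) = (q_h, φ_h) for all φ_h ∈ M_h; ((q_h)_t, ψ_h) + κ(∇(p̃_h + αq_h), ∇ψ_h) = 0 for all ψ_h ∈ W_h; with f time-independent. Set p_h := p̃_h + αq_h. Then the discrete energy law holds: J_h(t) + κ∫₀ᵗ‖∇p_h(s)‖²_{L²} ds = J_h(0) for all t ∈ (0,T], where J_h(t) := ½[β‖∇u_h(t)‖² + α‖q_h(t)‖² − 2⟨f, u_h(t)⟩]. -/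

import Mathlib

open scoped RealInnerProductSpace

/-- discrete energy law for the semi-discrete finite element gel system.
If `(u_h, p̃_h, q_h) : (0,T] → V_h × M_h × W_h` (with `M_h = W_h ⊂ H¹(Ω)`) solves
`β(∇u_h, ∇v_h) − (p̃_h, div v_h) = ⟨f, v_h⟩`, `(div u_h, φ_h) = (q_h, φ_h)`,
`((q_h)_t, ψ_h) + κ(∇(p̃_h + αq_h), ∇ψ_h) = 0` with `f` time-independent, and
`p_h := p̃_h + αq_h`, then `J_h(t) + κ∫₀ᵗ‖∇p_h(s)‖² ds = J_h(0)` for all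
`t ∈ (0,T]`, where `J_h(t) := ½[β‖∇u_h(t)‖² + α‖q_h(t)‖² − 2⟨f, u_h(t)⟩]`.
Here `Vh` plays the role of `V_h`, `Mh` of `M_h = W_h`, `emb : M_h ↪ L²(Ω)`,
and `gradM` the gradient on `M_h`. -/
theorem gel_semidiscrete_energy_law
    {L2 Vh Mh GV GM : Type*}
    [NormedAddCommGroup L2] [InnerProductSpace ℝ L2]
    [NormedAddCommGroup Vh] [InnerProductSpace ℝ Vh]
    [NormedAddCommGroup Mh] [InnerProductSpace ℝ Mh]
    [NormedAddCommGroup GV] [InnerProductSpace ℝ GV]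
    [NormedAddCommGroup GM] [InnerProductSpace ℝ GM]
    (T α β κ : ℝ) (hT : 0 < T) (hα : 0 < α) (hβ : 0 < β) (hκ : 0 < κ)
    (dvg : Vh →L[ℝ] L2) (gradV : Vh →L[ℝ] GV)
    (emb : Mh →L[ℝ] L2) (gradM : Mh →L[ℝ] GM)
    (f : Vh →L[ℝ] ℝ)
    (uh uh' : ℝ → Vh) (pth : ℝ → Mh) (qh qh' : ℝ → Mh)
    (huh : ∀ t ∈ Set.Icc (0:ℝ) T, HasDerivAt uh (uh' t) t)
    (hqh : ∀ t ∈ Set.Icc (0:ℝ) T, HasDerivAt qh (qh' t) t)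
    (hptcont : ContinuousOn pth (Set.Icc (0:ℝ) T))
    (heq1 : ∀ t ∈ Set.Icc (0:ℝ) T, ∀ vh : Vh,
      β * ⟪gradV (uh t), gradV vh⟫ - ⟪emb (pth t), dvg vh⟫ = f vh)
    (heq2 : ∀ t ∈ Set.Icc (0:ℝ) T, ∀ φh : Mh,
      ⟪dvg (uh t), emb φh⟫ = ⟪emb (qh t), emb φh⟫)
    (heq3 : ∀ t ∈ Set.Icc (0:ℝ) T, ∀ ψh : Mh,
      ⟪emb (qh' t), emb ψh⟫ + κ * ⟪gradM (pth t + α • qh t), gradM ψh⟫ = 0)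
    (Jh : ℝ → ℝ)
    (hJh : ∀ t : ℝ, Jh t
      = (1/2) * (β * ‖gradV (uh t)‖^2 + α * ‖emb (qh t)‖^2 - 2 * f (uh t))) :
    ∀ t ∈ Set.Ioc (0:ℝ) T,
      Jh t + κ * ∫ s in (0:ℝ)..t, ‖gradM (pth s + α • qh s)‖^2 = Jh 0 := by
  -- continuity of qh
  have hcq : ContinuousOn qh (Set.Icc (0:ℝ) T) := fun s hs =>
    ((hqh s hs).continuousAt).continuousWithinAt
  -- differentiated second equation
  have hdiff2 : ∀ s ∈ Set.Icc (0:ℝ) T, ∀ φh : Mh,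
      ⟪dvg (uh' s), emb φh⟫ = ⟪emb (qh' s), emb φh⟫ := by
    intro s hs φh
    set g : ℝ → ℝ := fun t => ⟪dvg (uh t), emb φh⟫ - ⟪emb (qh t), emb φh⟫ with hg
    have hgd : HasDerivAt g (⟪dvg (uh' s), emb φh⟫ - ⟪emb (qh' s), emb φh⟫) s := by
      have h1 : HasDerivAt (fun t => dvg (uh t)) (dvg (uh' s)) s :=
        dvg.hasFDerivAt.comp_hasDerivAt s (huh s hs)
      have h2 : HasDerivAt (fun t => emb (qh t)) (emb (qh' s)) s :=
        emb.hasFDerivAt.comp_hasDerivAt s (hqh s hs)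
      have h1' := (h1.inner ℝ (hasDerivAt_const s (emb φh)))
      have h2' := (h2.inner ℝ (hasDerivAt_const s (emb φh)))
      have h3 : HasDerivAt g _ s := h1'.sub h2'
      simpa using h3
    have hzero : ∀ y ∈ Set.Icc (0:ℝ) T, g y = 0 := by
      intro y hy
      simp [hg, heq2 y hy φh]
    have hW0 : HasDerivWithinAt g 0 (Set.Icc (0:ℝ) T) s := by
      have := (hasDerivWithinAt_const s (Set.Icc (0:ℝ) T) (0:ℝ))
      exact this.congr hzero (hzero s hs)
    have hW1 : HasDerivWithinAt g (⟪dvg (uh' s), emb φh⟫ - ⟪emb (qh' s), emb φh⟫)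
        (Set.Icc (0:ℝ) T) s := hgd.hasDerivWithinAt
    have hud : UniqueDiffWithinAt ℝ (Set.Icc (0:ℝ) T) s :=
      (uniqueDiffOn_Icc hT) s hs
    have := hW1.derivWithin hud
    rw [hW0.derivWithin hud] at this
    linarith
  -- the derivative of Jh
  have hJfun : Jh = fun t => (1/2) * (β * ⟪gradV (uh t), gradV (uh t)⟫
      + α * ⟪emb (qh t), emb (qh t)⟫ - 2 * f (uh t)) := by
    funext t
    rw [hJh, real_inner_self_eq_norm_sq, real_inner_self_eq_norm_sq]
  have key : ∀ s ∈ Set.Icc (0:ℝ) T,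
      HasDerivAt Jh (-(κ * ‖gradM (pth s + α • qh s)‖^2)) s := by
    intro s hs
    have hGu : HasDerivAt (fun t => gradV (uh t)) (gradV (uh' s)) s :=
      gradV.hasFDerivAt.comp_hasDerivAt s (huh s hs)
    have hEq : HasDerivAt (fun t => emb (qh t)) (emb (qh' s)) s :=
      emb.hasFDerivAt.comp_hasDerivAt s (hqh s hs)
    have hfu : HasDerivAt (fun t => f (uh t)) (f (uh' s)) s :=
      f.hasFDerivAt.comp_hasDerivAt s (huh s hs)
    have hd : HasDerivAt (fun t => (1/2) * (β * ⟪gradV (uh t), gradV (uh t)⟫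
        + α * ⟪emb (qh t), emb (qh t)⟫ - 2 * f (uh t)))
        ((1/2) * (β * (⟪gradV (uh s), gradV (uh' s)⟫ + ⟪gradV (uh' s), gradV (uh s)⟫)
          + α * (⟪emb (qh s), emb (qh' s)⟫ + ⟪emb (qh' s), emb (qh s)⟫)
          - 2 * f (uh' s))) s := by
      exact ((((hGu.inner ℝ hGu).const_mul β).add
        ((hEq.inner ℝ hEq).const_mul α)).sub (hfu.const_mul 2)).const_mul (1/2)
    rw [hJfun]
    convert hd using 1
    -- identities
    have A1 := heq1 s hs (uh' s)
    have A2 := hdiff2 s hs (pth s)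
    have A3 := heq3 s hs (pth s)
    have A4 := heq3 s hs (qh s)
    have hgp : gradM (pth s + α • qh s) = gradM (pth s) + α • gradM (qh s) := by
      simp
    have A5 : ⟪gradM (pth s + α • qh s), gradM (pth s + α • qh s)⟫
        = ⟪gradM (pth s + α • qh s), gradM (pth s)⟫
          + α * ⟪gradM (pth s + α • qh s), gradM (qh s)⟫ := by
      nth_rewrite 2 [hgp]
      rw [inner_add_right, real_inner_smul_right]
    have C1 : ⟪gradV (uh' s), gradV (uh s)⟫ = ⟪gradV (uh s), gradV (uh' s)⟫ :=
      real_inner_comm _ _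
    have C2 : ⟪emb (qh s), emb (qh' s)⟫ = ⟪emb (qh' s), emb (qh s)⟫ :=
      real_inner_comm _ _
    have C3 : ⟪emb (pth s), dvg (uh' s)⟫ = ⟪dvg (uh' s), emb (pth s)⟫ :=
      real_inner_comm _ _
    rw [← real_inner_self_eq_norm_sq]
    linear_combination -((β/2) * C1) - ((α/2) * C2) - A1 - C3 - A2 - A3 - α * A4 - κ * A5
  -- integrate
  intro t ht
  have hsub : Set.uIcc (0:ℝ) t ⊆ Set.Icc (0:ℝ) T := by
    rw [Set.uIcc_of_le ht.1.le]
    exact Set.Icc_subset_Icc le_rfl ht.2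
  have hF : ContinuousOn (fun s => ‖gradM (pth s + α • qh s)‖^2) (Set.Icc (0:ℝ) T) :=
    ((gradM.continuous.comp_continuousOn (hptcont.add (hcq.const_smul α))).norm.pow 2)
  have hint : IntervalIntegrable (fun s => -(κ * ‖gradM (pth s + α • qh s)‖^2))
      MeasureTheory.volume 0 t :=
    (((hF.mono hsub).const_smul κ).neg).intervalIntegrable
  have hFTC := intervalIntegral.integral_eq_sub_of_hasDerivAt
    (fun s hsx => key s (hsub hsx)) hint
  have hI : ∫ s in (0:ℝ)..t, -(κ * ‖gradM (pth s + α • qh s)‖^2)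
      = -(κ * ∫ s in (0:ℝ)..t, ‖gradM (pth s + α • qh s)‖^2) := by
    rw [intervalIntegral.integral_neg, intervalIntegral.integral_const_mul]
  rw [hI] at hFTC
  linarith
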